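/- Let G be a simple graph on n vertices. Then det W_Q(G∘P₂) = ε · a₀ · (det W_Q(G))² for some ε ∈ {1, −1}, where W_Q(G∘P₂) is the 2n×2n Q-walk matrix of the rooted product G∘P₂ and a₀ is the constant term of the characteristic polynomial det(tI − Q(G)). -/

import Mathlib

open Matrix Polynomial BigOperators

/-- The signless Laplacian matrix `Q(G) = D(G) + A(G)` of a simple graph. -/
noncomputable def qMat (R : Type) [Ring R] {V : Type} [Fintype V] [DecidableEq V]
    (G : SimpleGraph V) : Matrix V V R :=
  letI := Classical.decRel G.Adj
  G.degMatrix R + G.adjMatrix R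

/-- The determinant of the Q-walk matrix `[e, Qe, …, Q^{m-1}e]` of a graph
(rows indexed by vertices via a fixed enumeration; well defined up to sign). -/
noncomputable def qWalkDet {V : Type} [Fintype V] [DecidableEq V] (G : SimpleGraph V) : ℝ :=
  Matrix.det (Matrix.of fun i j : Fin (Fintype.card V) =>
    ((qMat ℝ G ^ (j : ℕ)) *ᵥ (fun _ => (1 : ℝ))) ((Fintype.equivFin V).symm i))

/-- The rooted product `G ∘ P_k`: a pendant path on `k-1` extra vertices attached
at each vertex of `G`; level `0` is the copy of `G`. -/
def rootedProd {V : Type} (G : SimpleGraph V) (k : ℕ) : SimpleGraph (V × Fin k) :=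
  SimpleGraph.fromRel (fun a b =>
    (a.2 = b.2 ∧ (a.2 : ℕ) = 0 ∧ G.Adj a.1 b.1) ∨ (a.1 = b.1 ∧ (a.2 : ℕ) + 1 = (b.2 : ℕ)))

/-- A graph is determined by its generalized Q-spectrum. -/
def IsDGQS {V : Type} [Fintype V] [DecidableEq V] (G : SimpleGraph V) : Prop :=
  ∀ H : SimpleGraph V,
    (qMat ℝ H).charpoly = (qMat ℝ G).charpoly →
    (qMat ℝ Hᶜ).charpoly = (qMat ℝ Gᶜ).charpoly →
    Nonempty (H ≃g G)


namespace DetWalkAux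
open Finset

/-! ### The `2×2` Fibonacci-type matrix over `ℤ[X]` -/

noncomputable def zMat : Matrix (Fin 2) (Fin 2) (Polynomial ℤ) := !![0, 1; 1, X]
noncomputable def zMatInv : Matrix (Fin 2) (Fin 2) (Polynomial ℤ) := !![-X, 1; 1, 0]

lemma zMat_mul_inv : zMat * zMatInv = 1 := by
  simp [zMat, zMatInv, Matrix.mul_fin_two, Matrix.one_fin_two, mul_comm]

lemma zMatInv_mul : zMatInv * zMat = 1 := by
  simp [zMat, zMatInv, Matrix.mul_fin_two, Matrix.one_fin_two, mul_comm]

noncomputable def zUnit : (Matrix (Fin 2) (Fin 2) (Polynomial ℤ))ˣ :=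
  ⟨zMat, zMatInv, zMat_mul_inv, zMatInv_mul⟩

/-- `th k = ζ^k` for `k : ℤ`. -/
noncomputable def th (k : ℤ) : Matrix (Fin 2) (Fin 2) (Polynomial ℤ) := ↑(zUnit ^ k)

lemma th_zero : th 0 = 1 := by simp [th]

lemma th_add_one (k : ℤ) : th (k + 1) = th k * zMat := by
  rw [th, _root_.zpow_add_one, Units.val_mul, th]; rfl

lemma th_sub_one (k : ℤ) : th (k - 1) = th k * zMatInv := by
  rw [th, _root_.zpow_sub_one, Units.val_mul, th]; rfl

lemma th_mul (a b : ℤ) : th (a + b) = th a * th b := by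
  rw [th, _root_.zpow_add, Units.val_mul, th, th]

lemma th_one : th 1 = zMat := by
  rw [show (1:ℤ) = 0 + 1 by ring, th_add_one, th_zero, one_mul]

lemma th_entries_mul_zMat (M : Matrix (Fin 2) (Fin 2) (Polynomial ℤ)) :
    (M * zMat) 0 0 = M 0 1 ∧ (M * zMat) 0 1 = M 0 0 + X * M 0 1 := by
  constructor <;> simp [zMat, Matrix.mul_apply, Fin.sum_univ_two] <;> ring

lemma th_entries_mul_zMatInv (M : Matrix (Fin 2) (Fin 2) (Polynomial ℤ)) :
    (M * zMatInv) 0 0 = -(X * M 0 0) + M 0 1 ∧ (M * zMatInv) 0 1 = M 0 0 := by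
  constructor <;> simp [zMatInv, Matrix.mul_apply, Fin.sum_univ_two] <;> ring

lemma coeff_X_mul_eq_zero {p : Polynomial ℤ} {j : ℕ} (h : ∀ i, j ≤ i + 1 → p.coeff i = 0) :
    (X * p).coeff j = 0 := by
  cases j with
  | zero => simp
  | succ j => rw [Polynomial.coeff_X_mul]; exact h j (by omega)

/-- coefficient bounds, positive side: entries of `ζ^(k+1)`. -/
lemma th_pos_bound (k : ℕ) :
    (∀ j, k ≤ j → ((th (k+1)) 0 0).coeff j = 0) ∧
    (∀ j, k + 1 ≤ j → ((th (k+1)) 0 1).coeff j = 0) := by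
  induction k with
  | zero =>
      constructor <;> intro j hj <;> simp [th_one, zMat]
      · rw [Polynomial.coeff_one]
        simp; omega
  | succ k ih =>
      have h : th ((k+1:ℕ)+1 : ℤ) = th ((k:ℕ)+1) * zMat := by
        rw [← th_add_one]; norm_num
      obtain ⟨e1, e2⟩ := th_entries_mul_zMat (th ((k:ℕ)+1))
      rw [show (((k+1:ℕ)):ℤ)+1 = ((k:ℕ):ℤ)+1+1 by push_cast; ring] at h
      constructor
      · intro j hj
        rw [show (((k+1:ℕ)):ℤ)+1 = ((k:ℕ):ℤ)+1+1 by push_cast; ring, h, e1]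
        exact ih.2 j (by omega)
      · intro j hj
        rw [show (((k+1:ℕ)):ℤ)+1 = ((k:ℕ):ℤ)+1+1 by push_cast; ring, h, e2]
        rw [Polynomial.coeff_add, ih.1 j (by omega), zero_add]
        exact coeff_X_mul_eq_zero (fun i hi => ih.2 i (by omega))

/-- coefficient bounds, negative side: entries of `ζ^(-j)`. -/
lemma th_neg_bound (j : ℕ) :
    (∀ k, j + 1 ≤ k → ((th (-j)) 0 0).coeff k = 0) ∧
    (∀ k, j ≤ k → ((th (-j)) 0 1).coeff k = 0) := by
  induction j with
  | zero =>
      constructor <;> intro k hk <;> simp [th_zero, Matrix.one_apply]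
      rw [Polynomial.coeff_one]
      simp; omega
  | succ j ih =>
      have h : th (-(j+1:ℕ)) = th (-(j:ℕ)) * zMatInv := by
        rw [show (-(j+1:ℕ) : ℤ) = (-(j:ℕ)) - 1 by push_cast; ring, th_sub_one]
      obtain ⟨e1, e2⟩ := th_entries_mul_zMatInv (th (-(j:ℕ)))
      constructor
      · intro k hk
        rw [h, e1]
        rw [Polynomial.coeff_add, Polynomial.coeff_neg, ih.2 k (by omega)]
        rw [coeff_X_mul_eq_zero (fun i hi => ih.1 i (by omega))]
        simp
      · intro k hk
        rw [h, e2]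
        exact ih.1 k (by omega)


lemma zMat_entry00 : zMat 0 0 = 0 := by simp [zMat]
lemma zMat_entry01 : zMat 0 1 = 1 := by simp [zMat]

lemma zMat_sub_inv :
    zMat - zMatInv = (X : Polynomial ℤ) • (1 : Matrix (Fin 2) (Fin 2) (Polynomial ℤ)) := by
  ext a b
  fin_cases a <;> fin_cases b <;>
    simp [zMat, zMatInv, Matrix.one_apply]

lemma th_zero' : th 0 = 1 := th_zero

lemma zMat_pow (m : ℕ) : zMat ^ m = th m := by
  rw [th, zpow_natCast, Units.val_pow_eq_pow_val]; rfl

lemma zMatInv_pow (e : ℕ) : zMatInv ^ e = th (-(e:ℤ)) := by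
  rw [th, _root_.zpow_neg, zpow_natCast, ← inv_pow, Units.val_pow_eq_pow_val]; rfl

lemma commute_zMat_zMatInv : Commute zMat zMatInv := by
  unfold Commute SemiconjBy
  rw [zMat_mul_inv, zMatInv_mul]

lemma hmove (s c : ℤ) (A B : Matrix (Fin 2) (Fin 2) (Polynomial ℤ)) :
    A * (((s : ℤ) : Matrix (Fin 2) (Fin 2) (Polynomial ℤ)) * B)
      * ((c : ℤ) : Matrix (Fin 2) (Fin 2) (Polynomial ℤ)) = (s*c) • (A*B) := by
  rw [← zsmul_eq_mul B s, mul_smul_comm,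
    ((Int.cast_commute c (s • (A*B))).symm).eq, ← zsmul_eq_mul (s • (A*B)) c, smul_smul, mul_comm c s]

/-- binomial key identity. -/
lemma key_binom (i : ℕ) :
    (X^i : Polynomial ℤ) • (1 : Matrix (Fin 2) (Fin 2) (Polynomial ℤ)) =
      ∑ m ∈ range (i+1), ((-1:ℤ)^(i-m) * ((i.choose m : ℕ) : ℤ)) • th (2*(m:ℤ) - (i:ℤ)) := by
  have h1 : (X^i : Polynomial ℤ) • (1 : Matrix (Fin 2) (Fin 2) (Polynomial ℤ))
      = (zMat + (-zMatInv))^i := by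
    rw [← sub_eq_add_neg, zMat_sub_inv, _root_.smul_pow, one_pow]
  rw [h1, Commute.add_pow commute_zMat_zMatInv.neg_right]
  refine Finset.sum_congr rfl (fun m hm => ?_)
  have hmi : m ≤ i := by simpa using Nat.lt_succ_iff.mp (Finset.mem_range.mp hm)
  have hth : th (m:ℤ) * th (-(↑(i-m):ℤ)) = th (2*(m:ℤ) - (i:ℤ)) := by
    rw [← th_mul]
    congr 1
    push_cast [hmi]
    ring
  have hcast1 : ((-1 : Matrix (Fin 2) (Fin 2) (Polynomial ℤ)))^(i-m)
      = (((-1:ℤ)^(i-m) : ℤ) : Matrix (Fin 2) (Fin 2) (Polynomial ℤ)) := by push_cast; ring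
  have hc2 : ((i.choose m : ℕ) : Matrix (Fin 2) (Fin 2) (Polynomial ℤ))
      = (((i.choose m : ℕ) : ℤ) : Matrix (Fin 2) (Fin 2) (Polynomial ℤ)) := by push_cast; ring
  rw [neg_pow, zMat_pow, zMatInv_pow, hcast1, hc2, hmove, hth]


variable {n : ℕ}

/-- coefficient vector extraction of a `2×2` polynomial matrix. -/
noncomputable def vecZ (n : ℕ) (M : Matrix (Fin 2) (Fin 2) (Polynomial ℤ)) : (Fin n ⊕ Fin n) → ℤ :=
  Sum.elim (fun i => (M 0 0 - M 0 1).coeff i) (fun i => (M 0 1).coeff i)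

lemma vecZ_add (A B : Matrix (Fin 2) (Fin 2) (Polynomial ℤ)) (r : Fin n ⊕ Fin n) :
    vecZ n (A + B) r = vecZ n A r + vecZ n B r := by
  cases r <;> simp [vecZ] <;> ring

lemma vecZ_smul (a : ℤ) (A : Matrix (Fin 2) (Fin 2) (Polynomial ℤ)) (r : Fin n ⊕ Fin n) :
    vecZ n (a • A) r = a * vecZ n A r := by
  cases r <;> simp [vecZ] <;> ring

lemma vecZ_sum {s : Finset ℕ} (f : ℕ → Matrix (Fin 2) (Fin 2) (Polynomial ℤ))
    (r : Fin n ⊕ Fin n) :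
    vecZ n (∑ m ∈ s, f m) r = ∑ m ∈ s, vecZ n (f m) r := by
  classical
  induction s using Finset.induction with
  | empty => cases r <;> simp [vecZ]
  | insert _ _ h ih =>
      rw [Finset.sum_insert h, Finset.sum_insert h, vecZ_add, ih]

/-- the integer matrix `Θ` whose columns are coefficient vectors of `ζ`-powers. -/
noncomputable def thetaZ (n : ℕ) : Matrix (Fin n ⊕ Fin n) (Fin n ⊕ Fin n) ℤ :=
  Matrix.of fun r c => vecZ n (th (((finSumFinEquiv c : ℕ) : ℤ) - ((n - 1 : ℕ) : ℤ))) r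

/-- explicit integer inverse of `Θ`. -/
noncomputable def xiZ (n : ℕ) : Matrix (Fin n ⊕ Fin n) (Fin n ⊕ Fin n) ℤ :=
  Matrix.of fun c t =>
    Sum.elim
      (fun i : Fin n => ∑ m ∈ range ((i:ℕ)+1),
        if ((finSumFinEquiv c : ℕ)) + (i:ℕ) = (n-1) + 2*m
        then (-1:ℤ)^((i:ℕ)-m) * (((i:ℕ).choose m : ℕ) : ℤ) else 0)
      (fun i : Fin n => ∑ m ∈ range ((i:ℕ)+1),
        ((-1:ℤ)^((i:ℕ)-m) * (((i:ℕ).choose m : ℕ) : ℤ)) *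
          ((if ((finSumFinEquiv c : ℕ)) + (i:ℕ) = (n-1) + 2*m then 1 else 0)
           + (if ((finSumFinEquiv c : ℕ)) + (i:ℕ) = n + 2*m then 1 else 0))) t

lemma sum_col_eq (f : ℕ → ℤ) (val : ℕ) (h : val < n + n) :
    ∑ c : Fin n ⊕ Fin n, (if (finSumFinEquiv c : ℕ) = val then f (finSumFinEquiv c : ℕ) else 0)
      = f val := by
  rw [Fintype.sum_equiv finSumFinEquiv
    (fun c : Fin n ⊕ Fin n => if (finSumFinEquiv c : ℕ) = val then f (finSumFinEquiv c : ℕ) else 0)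
    (fun x : Fin (n+n) => if (x : ℕ) = val then f (x : ℕ) else 0) (fun c => rfl)]
  rw [Fin.sum_univ_eq_sum_range (fun x => if x = val then f x else 0)]
  rw [Finset.sum_ite_eq' (range (n+n)) val f]
  simp [h]

lemma col_pick (r : Fin n ⊕ Fin n) (i : Fin n) (coef : ℤ) (K : ℕ) (hK : (i:ℕ) ≤ K)
    (hK2 : K - (i:ℕ) < n + n) :
    ∑ c : Fin n ⊕ Fin n,
        (if (finSumFinEquiv c : ℕ) + (i:ℕ) = K then coef * thetaZ n r c else 0)
      = coef * vecZ n (th (((K - (i:ℕ) : ℕ) : ℤ) - ((n-1:ℕ):ℤ))) r := by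
  have key : ∀ c : Fin n ⊕ Fin n,
      (if (finSumFinEquiv c : ℕ) + (i:ℕ) = K then coef * thetaZ n r c else 0)
      = (if (finSumFinEquiv c : ℕ) = K - (i:ℕ) then
          (fun v : ℕ => coef * vecZ n (th ((v : ℤ) - ((n-1:ℕ):ℤ))) r) (finSumFinEquiv c : ℕ)
         else 0) := by
    intro c
    exact if_congr (by omega) rfl rfl
  rw [Finset.sum_congr rfl (fun c _ => key c)]
  simpa using sum_col_eq (fun v : ℕ => coef * vecZ n (th ((v : ℤ) - ((n-1:ℕ):ℤ))) r) (K - (i:ℕ)) hK2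

lemma mul_ite_split (t coef : ℤ) (P Q : Prop) [Decidable P] [Decidable Q] :
    t * (coef * ((if P then (1:ℤ) else 0) + (if Q then (1:ℤ) else 0)))
     = (if P then coef * t else 0) + (if Q then coef * t else 0) := by
  by_cases hP : P <;> by_cases hQ : Q <;> simp [hP, hQ] <;> ring

lemma one_entry_01 : ((1 : Matrix (Fin 2) (Fin 2) (Polynomial ℤ)) 0 1) = 0 :=
  Matrix.one_apply_ne (by decide)

lemma theta_mul_xi : (thetaZ n) * xiZ n = 1 := by
  ext r t
  rw [Matrix.mul_apply]
  rcases t with i | i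
  · -- target `(X^i, 0)`
    have hi : (i:ℕ) < n := i.isLt
    have step1 : ∀ c : Fin n ⊕ Fin n, thetaZ n r c * xiZ n c (Sum.inl i)
        = ∑ m ∈ range ((i:ℕ)+1),
            (if (finSumFinEquiv c : ℕ) + (i:ℕ) = (n-1) + 2*m
             then ((-1:ℤ)^((i:ℕ)-m) * (((i:ℕ).choose m : ℕ) : ℤ)) * thetaZ n r c
             else 0) := by
      intro c
      simp only [xiZ, Matrix.of_apply, Sum.elim_inl]
      rw [Finset.mul_sum]
      refine Finset.sum_congr rfl (fun m hm => ?_)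
      rw [mul_ite, mul_zero, mul_comm (thetaZ n r c) ((-1:ℤ)^((i:ℕ)-m) * (((i:ℕ).choose m : ℕ) : ℤ))]
    rw [Finset.sum_congr rfl (fun c _ => step1 c), Finset.sum_comm]
    have step2 : ∀ m ∈ range ((i:ℕ)+1),
        (∑ c : Fin n ⊕ Fin n,
          if (finSumFinEquiv c : ℕ) + (i:ℕ) = (n-1) + 2*m
          then ((-1:ℤ)^((i:ℕ)-m) * (((i:ℕ).choose m : ℕ) : ℤ)) * thetaZ n r c else 0)
        = ((-1:ℤ)^((i:ℕ)-m) * (((i:ℕ).choose m : ℕ) : ℤ)) *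
            vecZ n (th (2*(m:ℤ) - ((i:ℕ):ℤ))) r := by
      intro m hm
      have hm' : m ≤ (i:ℕ) := by
        have := Finset.mem_range.mp hm; omega
      have h1 : (i:ℕ) ≤ (n-1) + 2*m := by omega
      have h2 : ((n-1) + 2*m) - (i:ℕ) < n + n := by omega
      rw [col_pick r i ((-1:ℤ)^((i:ℕ)-m) * (((i:ℕ).choose m : ℕ) : ℤ)) ((n-1) + 2*m) h1 h2]
      have harith : (((n-1) + 2*m - (i:ℕ) : ℕ) : ℤ) - ((n-1:ℕ) : ℤ) = 2*(m:ℤ) - ((i:ℕ):ℤ) := by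
        omega
      rw [harith]
    rw [Finset.sum_congr rfl step2]
    have step3 : ∑ m ∈ range ((i:ℕ)+1),
        ((-1:ℤ)^((i:ℕ)-m) * (((i:ℕ).choose m : ℕ) : ℤ)) * vecZ n (th (2*(m:ℤ) - ((i:ℕ):ℤ))) r
        = vecZ n ((X^(i:ℕ) : Polynomial ℤ) • (1 : Matrix (Fin 2) (Fin 2) (Polynomial ℤ))) r := by
      rw [key_binom, vecZ_sum]
      exact Finset.sum_congr rfl (fun m _ => (vecZ_smul _ _ _).symm)
    rw [step3]
    have e00 : ((X^(i:ℕ) : Polynomial ℤ) • (1 : Matrix (Fin 2) (Fin 2) (Polynomial ℤ))) 0 0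
        = X^(i:ℕ) := by rw [Matrix.smul_apply, Matrix.one_apply_eq, smul_eq_mul, mul_one]
    have e01 : ((X^(i:ℕ) : Polynomial ℤ) • (1 : Matrix (Fin 2) (Fin 2) (Polynomial ℤ))) 0 1
        = 0 := by rw [Matrix.smul_apply, one_entry_01, smul_zero]
    rcases r with j | j
    · simp only [vecZ, Sum.elim_inl]
      rw [e00, e01, sub_zero, Polynomial.coeff_X_pow, Matrix.one_apply]
      by_cases hji : j = i
      · subst hji; simp
      · rw [if_neg (fun h => hji (Fin.ext h)), if_neg (by simp [hji])]
    · simp only [vecZ, Sum.elim_inr]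
      rw [e01, Polynomial.coeff_zero, Matrix.one_apply, if_neg (by simp)]
  · -- target `(0, X^i)`
    have hi : (i:ℕ) < n := i.isLt
    have step1 : ∀ c : Fin n ⊕ Fin n, thetaZ n r c * xiZ n c (Sum.inr i)
        = (∑ m ∈ range ((i:ℕ)+1),
            (if (finSumFinEquiv c : ℕ) + (i:ℕ) = (n-1) + 2*m
             then ((-1:ℤ)^((i:ℕ)-m) * (((i:ℕ).choose m : ℕ) : ℤ)) * thetaZ n r c else 0))
          + (∑ m ∈ range ((i:ℕ)+1),
            (if (finSumFinEquiv c : ℕ) + (i:ℕ) = n + 2*m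
             then ((-1:ℤ)^((i:ℕ)-m) * (((i:ℕ).choose m : ℕ) : ℤ)) * thetaZ n r c else 0)) := by
      intro c
      simp only [xiZ, Matrix.of_apply, Sum.elim_inr]
      rw [Finset.mul_sum, ← Finset.sum_add_distrib]
      exact Finset.sum_congr rfl (fun m hm => mul_ite_split _ _ _ _)
    rw [Finset.sum_congr rfl (fun c _ => step1 c), Finset.sum_add_distrib]
    have swap1 : (∑ c : Fin n ⊕ Fin n, ∑ m ∈ range ((i:ℕ)+1),
        (if (finSumFinEquiv c : ℕ) + (i:ℕ) = (n-1) + 2*m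
         then ((-1:ℤ)^((i:ℕ)-m) * (((i:ℕ).choose m : ℕ) : ℤ)) * thetaZ n r c else 0))
        = ∑ m ∈ range ((i:ℕ)+1), ∑ c : Fin n ⊕ Fin n,
        (if (finSumFinEquiv c : ℕ) + (i:ℕ) = (n-1) + 2*m
         then ((-1:ℤ)^((i:ℕ)-m) * (((i:ℕ).choose m : ℕ) : ℤ)) * thetaZ n r c else 0) :=
      Finset.sum_comm
    have swap2 : (∑ c : Fin n ⊕ Fin n, ∑ m ∈ range ((i:ℕ)+1),
        (if (finSumFinEquiv c : ℕ) + (i:ℕ) = n + 2*m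
         then ((-1:ℤ)^((i:ℕ)-m) * (((i:ℕ).choose m : ℕ) : ℤ)) * thetaZ n r c else 0))
        = ∑ m ∈ range ((i:ℕ)+1), ∑ c : Fin n ⊕ Fin n,
        (if (finSumFinEquiv c : ℕ) + (i:ℕ) = n + 2*m
         then ((-1:ℤ)^((i:ℕ)-m) * (((i:ℕ).choose m : ℕ) : ℤ)) * thetaZ n r c else 0) :=
      Finset.sum_comm
    rw [swap1, swap2]
    have step2a : ∀ m ∈ range ((i:ℕ)+1),
        (∑ c : Fin n ⊕ Fin n,
          if (finSumFinEquiv c : ℕ) + (i:ℕ) = (n-1) + 2*m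
          then ((-1:ℤ)^((i:ℕ)-m) * (((i:ℕ).choose m : ℕ) : ℤ)) * thetaZ n r c else 0)
        = ((-1:ℤ)^((i:ℕ)-m) * (((i:ℕ).choose m : ℕ) : ℤ)) *
            vecZ n (th (2*(m:ℤ) - ((i:ℕ):ℤ))) r := by
      intro m hm
      have hm' : m ≤ (i:ℕ) := by have := Finset.mem_range.mp hm; omega
      have h1 : (i:ℕ) ≤ (n-1) + 2*m := by omega
      have h2 : ((n-1) + 2*m) - (i:ℕ) < n + n := by omega
      rw [col_pick r i ((-1:ℤ)^((i:ℕ)-m) * (((i:ℕ).choose m : ℕ) : ℤ)) ((n-1) + 2*m) h1 h2]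
      have harith : (((n-1) + 2*m - (i:ℕ) : ℕ) : ℤ) - ((n-1:ℕ) : ℤ) = 2*(m:ℤ) - ((i:ℕ):ℤ) := by
        omega
      rw [harith]
    have step2b : ∀ m ∈ range ((i:ℕ)+1),
        (∑ c : Fin n ⊕ Fin n,
          if (finSumFinEquiv c : ℕ) + (i:ℕ) = n + 2*m
          then ((-1:ℤ)^((i:ℕ)-m) * (((i:ℕ).choose m : ℕ) : ℤ)) * thetaZ n r c else 0)
        = ((-1:ℤ)^((i:ℕ)-m) * (((i:ℕ).choose m : ℕ) : ℤ)) *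
            vecZ n (th (2*(m:ℤ) - ((i:ℕ):ℤ) + 1)) r := by
      intro m hm
      have hm' : m ≤ (i:ℕ) := by have := Finset.mem_range.mp hm; omega
      have h1 : (i:ℕ) ≤ n + 2*m := by omega
      have h2 : (n + 2*m) - (i:ℕ) < n + n := by omega
      rw [col_pick r i ((-1:ℤ)^((i:ℕ)-m) * (((i:ℕ).choose m : ℕ) : ℤ)) (n + 2*m) h1 h2]
      have harith : ((n + 2*m - (i:ℕ) : ℕ) : ℤ) - ((n-1:ℕ) : ℤ) = 2*(m:ℤ) - ((i:ℕ):ℤ) + 1 := by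
        omega
      rw [harith]
    rw [Finset.sum_congr rfl step2a, Finset.sum_congr rfl step2b]
    have step3a : ∑ m ∈ range ((i:ℕ)+1),
        ((-1:ℤ)^((i:ℕ)-m) * (((i:ℕ).choose m : ℕ) : ℤ)) * vecZ n (th (2*(m:ℤ) - ((i:ℕ):ℤ))) r
        = vecZ n ((X^(i:ℕ) : Polynomial ℤ) • (1 : Matrix (Fin 2) (Fin 2) (Polynomial ℤ))) r := by
      rw [key_binom, vecZ_sum]
      exact Finset.sum_congr rfl (fun m _ => (vecZ_smul _ _ _).symm)
    have hb : ∑ m ∈ range ((i:ℕ)+1),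
        ((-1:ℤ)^((i:ℕ)-m) * (((i:ℕ).choose m : ℕ) : ℤ)) • th (2*(m:ℤ) - ((i:ℕ):ℤ) + 1)
        = (X^(i:ℕ) : Polynomial ℤ) • zMat := by
      have : ∀ m : ℕ, th (2*(m:ℤ) - ((i:ℕ):ℤ) + 1) = th (2*(m:ℤ) - ((i:ℕ):ℤ)) * zMat :=
        fun m => th_add_one _
      calc ∑ m ∈ range ((i:ℕ)+1),
            ((-1:ℤ)^((i:ℕ)-m) * (((i:ℕ).choose m : ℕ) : ℤ)) • th (2*(m:ℤ) - ((i:ℕ):ℤ) + 1)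
          = (∑ m ∈ range ((i:ℕ)+1),
              ((-1:ℤ)^((i:ℕ)-m) * (((i:ℕ).choose m : ℕ) : ℤ)) • th (2*(m:ℤ) - ((i:ℕ):ℤ)))
              * zMat := by
            rw [Finset.sum_mul]
            exact Finset.sum_congr rfl (fun m _ => by rw [this m, smul_mul_assoc])
        _ = ((X^(i:ℕ) : Polynomial ℤ) • (1 : Matrix (Fin 2) (Fin 2) (Polynomial ℤ))) * zMat := by
            rw [← key_binom]
        _ = (X^(i:ℕ) : Polynomial ℤ) • zMat := by rw [smul_mul_assoc, one_mul]
    have step3b : ∑ m ∈ range ((i:ℕ)+1),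
        ((-1:ℤ)^((i:ℕ)-m) * (((i:ℕ).choose m : ℕ) : ℤ)) *
          vecZ n (th (2*(m:ℤ) - ((i:ℕ):ℤ) + 1)) r
        = vecZ n ((X^(i:ℕ) : Polynomial ℤ) • zMat) r := by
      rw [← hb, vecZ_sum]
      exact Finset.sum_congr rfl (fun m _ => (vecZ_smul _ _ _).symm)
    rw [step3a, step3b, ← vecZ_add]
    have e00 : ((X^(i:ℕ) : Polynomial ℤ) • (1 : Matrix (Fin 2) (Fin 2) (Polynomial ℤ))) 0 0
        = X^(i:ℕ) := by rw [Matrix.smul_apply, Matrix.one_apply_eq, smul_eq_mul, mul_one]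
    have e01 : ((X^(i:ℕ) : Polynomial ℤ) • (1 : Matrix (Fin 2) (Fin 2) (Polynomial ℤ))) 0 1
        = 0 := by rw [Matrix.smul_apply, one_entry_01, smul_zero]
    have f00 : ((X^(i:ℕ) : Polynomial ℤ) • zMat) 0 0 = 0 := by
      rw [Matrix.smul_apply, zMat_entry00, smul_zero]
    have f01 : ((X^(i:ℕ) : Polynomial ℤ) • zMat) 0 1 = X^(i:ℕ) := by
      rw [Matrix.smul_apply, zMat_entry01, smul_eq_mul, mul_one]
    rcases r with j | j
    · simp only [vecZ, Sum.elim_inl, Matrix.add_apply]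
      rw [e00, e01, f00, f01, Matrix.one_apply, if_neg (by simp)]
      simp
    · simp only [vecZ, Sum.elim_inr, Matrix.add_apply]
      rw [e01, f01, zero_add, Polynomial.coeff_X_pow, Matrix.one_apply]
      by_cases hji : j = i
      · subst hji; simp
      · rw [if_neg (fun h => hji (Fin.ext h)), if_neg (by simp [hji])]

lemma theta_det_unit : (thetaZ n).det = 1 ∨ (thetaZ n).det = -1 := by
  have h := congrArg Matrix.det (theta_mul_xi (n := n))
  rw [Matrix.det_mul, Matrix.det_one] at h
  exact Int.isUnit_iff.mp (IsUnit.of_mul_eq_one _ h)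



/-- `(∑ f r • A r) *ᵥ v` entrywise. -/
lemma sum_smul_mulVec {m' : Type*} [Fintype m'] (s : Finset ℕ) (f : ℕ → ℝ)
    (A : ℕ → Matrix m' m' ℝ) (v : m' → ℝ) (i : m') :
    ((∑ r ∈ s, f r • A r) *ᵥ v) i = ∑ r ∈ s, f r * ((A r *ᵥ v) i) := by
  simp only [Matrix.mulVec, dotProduct, Matrix.sum_apply, Matrix.smul_apply,
    smul_eq_mul, Finset.sum_mul, Finset.mul_sum]
  rw [Finset.sum_comm]
  exact Finset.sum_congr rfl (fun r _ => Finset.sum_congr rfl (fun x _ => by ring))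

lemma Finset.sum_neg_distrib {α : Type*} [Fintype α] (f : α → ℝ) :
    ∑ r : α, (- f r) = - ∑ r : α, f r := by simp

/-! ### Real-side core: companion matrix, walk matrices, factorisation -/

section Core

variable {n : ℕ} (Q : Matrix (Fin n) (Fin n) ℝ)

/-- companion-type matrix of the characteristic polynomial of `Q`. -/
noncomputable def cm : Matrix (Fin n) (Fin n) ℝ :=
  Matrix.of fun i j => (if (i:ℕ) = (j:ℕ) + 1 then (1:ℝ) else 0)
    - (if (j:ℕ) = n - 1 then Q.charpoly.coeff (i:ℕ) else 0)

/-- the `n × n` walk matrix `[e, Qe, …]`. -/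
noncomputable def wk : Matrix (Fin n) (Fin n) ℝ :=
  Matrix.of fun i j => ((Q ^ (j:ℕ)) *ᵥ (fun _ => (1:ℝ))) i

noncomputable def bq : Matrix (Fin n ⊕ Fin n) (Fin n ⊕ Fin n) ℝ :=
  fromBlocks (Q + 1) 1 1 1

noncomputable def bigH : Matrix (Fin n ⊕ Fin n) (Fin n ⊕ Fin n) ℝ :=
  fromBlocks (wk Q) ((Q + 2) * wk Q) (wk Q) (2 * wk Q)

noncomputable def nMat : Matrix (Fin n ⊕ Fin n) (Fin n ⊕ Fin n) ℝ :=
  fromBlocks 0 (-(cm Q)) 1 (cm Q + 2)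

noncomputable def pMat : Matrix (Fin n ⊕ Fin n) (Fin n ⊕ Fin n) ℝ :=
  fromBlocks (-1) (-(cm Q)) 1 (cm Q + 1)

noncomputable def pInv : Matrix (Fin n ⊕ Fin n) (Fin n ⊕ Fin n) ℝ :=
  fromBlocks (-1 - cm Q) (-(cm Q)) 1 1

def uVec (n : ℕ) : (Fin n ⊕ Fin n) → ℝ :=
  Sum.elim (fun i => if (i:ℕ) = 0 then 1 else 0) 0

noncomputable def wBig : Matrix (Fin n ⊕ Fin n) (Fin n ⊕ Fin n) ℝ :=
  Matrix.of fun r c => ((bq Q ^ ((finSumFinEquiv c : ℕ))) *ᵥ (fun _ => (1:ℝ))) r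

noncomputable def gam : Matrix (Fin n ⊕ Fin n) (Fin n ⊕ Fin n) ℝ :=
  Matrix.of fun r c => ((nMat Q ^ ((finSumFinEquiv c : ℕ))) *ᵥ uVec n) r

noncomputable def binU (n : ℕ) : Matrix (Fin n ⊕ Fin n) (Fin n ⊕ Fin n) ℝ :=
  Matrix.of fun r c => if (finSumFinEquiv r : ℕ) ≤ (finSumFinEquiv c : ℕ)
    then (-1:ℝ)^((finSumFinEquiv c : ℕ) - (finSumFinEquiv r : ℕ)) *
      (((finSumFinEquiv c : ℕ).choose (finSumFinEquiv r : ℕ) : ℕ) : ℝ)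
    else 0

noncomputable def thetaR (n : ℕ) : Matrix (Fin n ⊕ Fin n) (Fin n ⊕ Fin n) ℝ :=
  (thetaZ n).map (Int.castRingHom ℝ)

/-- Key use of Cayley–Hamilton: `W · C = Q · W`. -/
lemma wk_mul_cm : wk Q * cm Q = Q * wk Q := by
  have hdeg : Q.charpoly.natDegree = n := by
    rw [Matrix.charpoly_natDegree_eq_dim, Fintype.card_fin]
  have hcoeffn : Q.charpoly.coeff n = 1 := by
    have := (Matrix.charpoly_monic Q).coeff_natDegree
    rwa [hdeg] at this
  ext i j
  have hn : 1 ≤ n := i.pos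
  rw [Matrix.mul_apply, Matrix.mul_apply]
  have hrhs : ∑ r, Q i r * wk Q r j = ((Q ^ ((j:ℕ)+1)) *ᵥ (fun _ => (1:ℝ))) i := by
    rw [pow_succ', ← Matrix.mulVec_mulVec]
    rfl
  rw [hrhs]
  by_cases hj : (j:ℕ) = n - 1
  · -- last column: Cayley–Hamilton
    have h0 : ∀ r : Fin n, wk Q i r * cm Q r j
        = - (Q.charpoly.coeff (r:ℕ) * wk Q i r) := by
      intro r
      rw [cm]
      simp only [Matrix.of_apply]
      rw [if_neg (by omega), if_pos hj]
      ring
    rw [Finset.sum_congr rfl (fun r _ => h0 r), Finset.sum_neg_distrib]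
    have hch : ∑ r ∈ Finset.range (n+1), Q.charpoly.coeff r • Q ^ r = 0 := by
      have h := Matrix.aeval_self_charpoly Q
      rwa [Polynomial.aeval_eq_sum_range' (n := n + 1) (by omega)] at h
    have hQn : Q ^ n = - ∑ r ∈ Finset.range n, Q.charpoly.coeff r • Q ^ r := by
      rw [Finset.sum_range_succ, hcoeffn, one_smul] at hch
      linear_combination (norm := module) hch
    have happ : ((Q ^ n) *ᵥ (fun _ => (1:ℝ))) i
        = - ∑ r ∈ Finset.range n, Q.charpoly.coeff r * ((Q ^ r *ᵥ (fun _ => (1:ℝ))) i) := by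
      rw [hQn, Matrix.neg_mulVec]
      simp only [Pi.neg_apply, neg_inj]
      rw [sum_smul_mulVec]
    have hj1 : (j:ℕ) + 1 = n := by omega
    rw [hj1, happ]
    rw [← Fin.sum_univ_eq_sum_range (fun r => Q.charpoly.coeff r * ((Q ^ r *ᵥ (fun _ => (1:ℝ))) i))]
    rfl
  · -- regular column: shift
    have hjlt : (j:ℕ) + 1 < n := by omega
    have h0 : ∀ r : Fin n, wk Q i r * cm Q r j
        = if r = (⟨(j:ℕ)+1, hjlt⟩ : Fin n) then wk Q i r else 0 := by
      intro r
      rw [cm]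
      simp only [Matrix.of_apply]
      rw [if_neg hj]
      by_cases hr : (r:ℕ) = (j:ℕ)+1
      · rw [if_pos hr, if_pos (Fin.ext hr)]
        ring
      · rw [if_neg hr, if_neg (fun h => hr (by rw [h]))]
        ring
    rw [Finset.sum_congr rfl (fun r _ => h0 r), Finset.sum_ite_eq' Finset.univ _ (wk Q i),
      if_pos (Finset.mem_univ _)]
    rfl

end Core


section Core2

variable {n : ℕ} (Q : Matrix (Fin n) (Fin n) ℝ)

lemma intertwine : bigH Q * nMat Q = bq Q * bigH Q := by
  have h := wk_mul_cm Q
  have h2 : wk Q * (cm Q + 2) = Q * wk Q + 2 * wk Q := by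
    rw [mul_add, h]
    noncomm_ring
  have e11 : wk Q * 0 + (Q + 2) * wk Q * 1 = (Q + 1) * wk Q + 1 * wk Q := by noncomm_ring
  have e12 : wk Q * (-(cm Q)) + (Q + 2) * wk Q * (cm Q + 2)
      = (Q + 1) * ((Q + 2) * wk Q) + 1 * (2 * wk Q) := by
    calc wk Q * (-(cm Q)) + (Q + 2) * wk Q * (cm Q + 2)
        = -(wk Q * cm Q) + (Q + 2) * (wk Q * (cm Q + 2)) := by noncomm_ring
      _ = -(Q * wk Q) + (Q + 2) * (Q * wk Q + 2 * wk Q) := by rw [h, h2]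
      _ = (Q + 1) * ((Q + 2) * wk Q) + 1 * (2 * wk Q) := by noncomm_ring
  have e21 : wk Q * 0 + 2 * wk Q * 1 = 1 * wk Q + 1 * wk Q := by noncomm_ring
  have e22 : wk Q * (-(cm Q)) + 2 * wk Q * (cm Q + 2)
      = 1 * ((Q + 2) * wk Q) + 1 * (2 * wk Q) := by
    calc wk Q * (-(cm Q)) + 2 * wk Q * (cm Q + 2)
        = -(wk Q * cm Q) + 2 * (wk Q * (cm Q + 2)) := by noncomm_ring
      _ = -(Q * wk Q) + 2 * (Q * wk Q + 2 * wk Q) := by rw [h, h2]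
      _ = 1 * ((Q + 2) * wk Q) + 1 * (2 * wk Q) := by noncomm_ring
  rw [bigH, nMat, bq, Matrix.fromBlocks_multiply, Matrix.fromBlocks_multiply,
    e11, e12, e21, e22]

lemma pMat_mul_pInv : pMat Q * pInv Q = 1 := by
  have e11 : (-1) * (-1 - cm Q) + (-(cm Q)) * 1 = (1 : Matrix (Fin n) (Fin n) ℝ) := by
    noncomm_ring
  have e12 : (-1) * (-(cm Q)) + (-(cm Q)) * 1 = (0 : Matrix (Fin n) (Fin n) ℝ) := by
    noncomm_ring
  have e21 : 1 * (-1 - cm Q) + (cm Q + 1) * 1 = (0 : Matrix (Fin n) (Fin n) ℝ) := by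
    noncomm_ring
  have e22 : 1 * (-(cm Q)) + (cm Q + 1) * 1 = (1 : Matrix (Fin n) (Fin n) ℝ) := by
    noncomm_ring
  rw [pMat, pInv, Matrix.fromBlocks_multiply, e11, e12, e21, e22, Matrix.fromBlocks_one]

lemma pInv_mul_pMat : pInv Q * pMat Q = 1 :=
  mul_eq_one_comm.mp (pMat_mul_pInv Q)

lemma pow_cancel : ∀ a : ℕ, pMat Q ^ a * pInv Q ^ a = 1 := by
  intro a
  induction a with
  | zero => simp
  | succ a ih =>
      rw [pow_succ, pow_succ']
      calc pMat Q ^ a * pMat Q * (pInv Q * pInv Q ^ a)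
          = pMat Q ^ a * (pMat Q * pInv Q) * pInv Q ^ a := by noncomm_ring
        _ = pMat Q ^ a * pInv Q ^ a := by rw [pMat_mul_pInv]; noncomm_ring
        _ = 1 := ih

lemma nMat_eq : nMat Q = pMat Q + 1 := by
  rw [nMat, pMat, ← Matrix.fromBlocks_one, Matrix.fromBlocks_add,
    show (-1 : Matrix (Fin n) (Fin n) ℝ) + 1 = 0 by abel,
    show (-(cm Q)) + 0 = -(cm Q) by abel,
    show (1 : Matrix (Fin n) (Fin n) ℝ) + 0 = 1 by abel,
    show cm Q + 1 + 1 = cm Q + 2 by rw [add_assoc]; norm_num]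

lemma bigH_mulVec_uVec : bigH Q *ᵥ uVec n = (fun _ => (1:ℝ)) := by
  funext x
  rw [bigH, uVec]
  rw [Matrix.fromBlocks_mulVec]
  have hW : ∀ i : Fin n, (wk Q *ᵥ (fun i0 : Fin n => if (i0:ℕ) = 0 then (1:ℝ) else 0)) i = 1 := by
    intro i
    have hn : 0 < n := i.pos
    rw [Matrix.mulVec]
    have : ∀ j : Fin n, wk Q i j * (if (j:ℕ) = 0 then (1:ℝ) else 0)
        = if j = (⟨0, hn⟩ : Fin n) then wk Q i j else 0 := by
      intro j
      by_cases hj : (j:ℕ) = 0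
      · rw [if_pos hj, if_pos (Fin.ext hj), mul_one]
      · rw [if_neg hj, if_neg (fun hh => hj (by rw [hh])), mul_zero]
    rw [show dotProduct (wk Q i) _ = ∑ j, wk Q i j * (if (j:ℕ) = 0 then (1:ℝ) else 0)
      from rfl]
    rw [Finset.sum_congr rfl (fun j _ => this j),
      Finset.sum_ite_eq' Finset.univ _ (wk Q i), if_pos (Finset.mem_univ _)]
    show ((Q ^ ((0:ℕ))) *ᵥ (fun _ => (1:ℝ))) i = 1
    rw [pow_zero, Matrix.one_mulVec]
  cases x with
  | inl i => simp [hW i]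
  | inr i => simp [hW i]

lemma colW : ∀ m : ℕ, bq Q ^ m *ᵥ (fun _ => (1:ℝ)) = bigH Q *ᵥ (nMat Q ^ m *ᵥ uVec n) := by
  intro m
  induction m with
  | zero => rw [pow_zero, pow_zero, Matrix.one_mulVec, Matrix.one_mulVec, bigH_mulVec_uVec]
  | succ m ih =>
      rw [pow_succ', pow_succ', ← Matrix.mulVec_mulVec, ih, Matrix.mulVec_mulVec,
        ← intertwine, ← Matrix.mulVec_mulVec, ← Matrix.mulVec_mulVec]

lemma wBig_factor : wBig Q = bigH Q * gam Q := by
  ext r c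
  rw [wBig, gam, Matrix.mul_apply]
  simp only [Matrix.of_apply]
  rw [colW]
  rfl

end Core2


section Core3

variable {n : ℕ} (Q : Matrix (Fin n) (Fin n) ℝ)

noncomputable def rTop (n : ℕ) (M : Matrix (Fin 2) (Fin 2) (Polynomial ℤ)) : Fin n → ℝ :=
  fun i => (((M 0 0 - M 0 1).coeff (i:ℕ) : ℤ) : ℝ)

noncomputable def rBot (n : ℕ) (M : Matrix (Fin 2) (Fin 2) (Polynomial ℤ)) : Fin n → ℝ :=
  fun i => (((M 0 1).coeff (i:ℕ) : ℤ) : ℝ)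

/-- action of the companion matrix on coefficient vectors is multiplication by `X`. -/
lemma cmul (p : Polynomial ℤ) (hp : p.coeff (n-1) = 0) :
    cm Q *ᵥ (fun i : Fin n => ((p.coeff (i:ℕ) : ℤ) : ℝ))
      = fun i : Fin n => (((X*p).coeff (i:ℕ) : ℤ) : ℝ) := by
  funext i
  have hn : 0 < n := i.pos
  show ∑ j, cm Q i j * ((p.coeff (j:ℕ) : ℤ) : ℝ) = _
  have hsplit : ∀ j : Fin n, cm Q i j * ((p.coeff (j:ℕ) : ℤ) : ℝ)
      = (if (i:ℕ) = (j:ℕ)+1 then (1:ℝ) else 0) * ((p.coeff (j:ℕ) : ℤ) : ℝ)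
        - (if (j:ℕ) = n-1 then Q.charpoly.coeff (i:ℕ) else 0) * ((p.coeff (j:ℕ) : ℤ) : ℝ) := by
    intro j
    rw [cm]
    simp only [Matrix.of_apply]
    ring
  rw [Finset.sum_congr rfl (fun j _ => hsplit j), Finset.sum_sub_distrib]
  have hsum2 : ∑ j : Fin n,
      (if (j:ℕ) = n-1 then Q.charpoly.coeff (i:ℕ) else 0) * ((p.coeff (j:ℕ) : ℤ) : ℝ) = 0 := by
    have h0 : ∀ j : Fin n,
        (if (j:ℕ) = n-1 then Q.charpoly.coeff (i:ℕ) else 0) * ((p.coeff (j:ℕ) : ℤ) : ℝ)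
        = if j = (⟨n-1, by omega⟩ : Fin n) then
            Q.charpoly.coeff (i:ℕ) * ((p.coeff (j:ℕ) : ℤ) : ℝ) else 0 := by
      intro j
      by_cases hj : (j:ℕ) = n-1
      · rw [if_pos hj, if_pos (Fin.ext hj)]
      · rw [if_neg hj, if_neg (fun hh => hj (by rw [hh])), zero_mul]
    rw [Finset.sum_congr rfl (fun j _ => h0 j), Finset.sum_ite_eq' Finset.univ _ _,
      if_pos (Finset.mem_univ _)]
    show Q.charpoly.coeff (i:ℕ) * ((p.coeff ((⟨n-1, by omega⟩ : Fin n) : ℕ) : ℤ) : ℝ) = 0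
    rw [show ((⟨n-1, by omega⟩ : Fin n) : ℕ) = n-1 from rfl, hp]
    simp
  rw [hsum2, sub_zero]
  rcases Nat.eq_zero_or_pos (i:ℕ) with hi0 | hipos
  · have h0 : ∀ j : Fin n,
        (if (i:ℕ) = (j:ℕ)+1 then (1:ℝ) else 0) * ((p.coeff (j:ℕ) : ℤ) : ℝ) = 0 := by
      intro j
      rw [if_neg (by omega), zero_mul]
    rw [Finset.sum_congr rfl (fun j _ => h0 j), Finset.sum_const_zero, hi0]
    simp
  · have hlt : (i:ℕ) - 1 < n := by omega
    have h0 : ∀ j : Fin n,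
        (if (i:ℕ) = (j:ℕ)+1 then (1:ℝ) else 0) * ((p.coeff (j:ℕ) : ℤ) : ℝ)
        = if j = (⟨(i:ℕ)-1, hlt⟩ : Fin n) then ((p.coeff (j:ℕ) : ℤ) : ℝ) else 0 := by
      intro j
      by_cases hj : (i:ℕ) = (j:ℕ)+1
      · have hje : j = (⟨(i:ℕ)-1, hlt⟩ : Fin n) := by
          apply Fin.ext
          show (j:ℕ) = (i:ℕ)-1
          omega
        rw [if_pos hj, if_pos hje, one_mul]
      · rw [if_neg hj, if_neg, zero_mul]
        intro hh
        apply hj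
        rw [hh]
        show (i:ℕ) = (i:ℕ) - 1 + 1
        omega
    rw [Finset.sum_congr rfl (fun j _ => h0 j), Finset.sum_ite_eq' Finset.univ _ _,
      if_pos (Finset.mem_univ _)]
    have : (X*p).coeff (i:ℕ) = p.coeff ((i:ℕ)-1) := by
      rcases Nat.exists_eq_succ_of_ne_zero (by omega : (i:ℕ) ≠ 0) with ⟨i', hi'⟩
      rw [hi', Polynomial.coeff_X_mul]
      simp
    rw [this]

lemma th_bot_coeff_top (k : ℕ) (hk : k ≤ n - 1) : ((th k) 0 1).coeff (n-1) = 0 := by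
  cases k with
  | zero =>
      rw [show ((0:ℕ):ℤ) = 0 from rfl, th_zero, one_entry_01]
      simp
  | succ k' =>
      rw [show ((k'+1:ℕ):ℤ) = (k':ℕ)+1 by push_cast; ring]
      exact (th_pos_bound k').2 (n-1) (by omega)

lemma th_top_coeff_neg (j : ℕ) (hj : j + 1 ≤ n - 1) : ((th (-(j:ℕ))) 0 0).coeff (n-1) = 0 :=
  (th_neg_bound j).1 (n-1) (by omega)

lemma lemPos : ∀ k, k ≤ n → pMat Q ^ k *ᵥ uVec n
    = Sum.elim (rTop n (th k)) (rBot n (th k)) := by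
  intro k
  induction k with
  | zero =>
      intro _
      rw [pow_zero, Matrix.one_mulVec, show ((0:ℕ):ℤ) = 0 from rfl, th_zero]
      funext x
      cases x with
      | inl i =>
          show (if (i:ℕ) = 0 then (1:ℝ) else 0) = rTop n 1 i
          rw [rTop, Matrix.one_apply_eq, one_entry_01, sub_zero, Polynomial.coeff_one]
          by_cases hi : (i:ℕ) = 0
          · rw [if_pos hi, if_pos (by omega)]; simp
          · rw [if_neg hi, if_neg (by omega)]; simp
      | inr i =>
          show (0:ℝ) = rBot n 1 i
          rw [rBot, one_entry_01]
          simp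
  | succ k ih =>
      intro hk1
      have hk : k ≤ n := by omega
      rw [pow_succ', ← Matrix.mulVec_mulVec, ih hk, pMat, Matrix.fromBlocks_mulVec]
      simp only [Sum.elim_comp_inl, Sum.elim_comp_inr]
      have hp01 : ((th k) 0 1).coeff (n-1) = 0 := th_bot_coeff_top k (by omega)
      have hcm : cm Q *ᵥ rBot n (th k)
          = fun i : Fin n => (((X * ((th k) 0 1)).coeff (i:ℕ) : ℤ) : ℝ) :=
        cmul Q ((th k) 0 1) hp01
      have hx : th ((k+1:ℕ)) = th k * zMat := by
        rw [show ((k+1:ℕ):ℤ) = (k:ℤ)+1 by push_cast; ring, th_add_one]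
      obtain ⟨e00, e01⟩ := th_entries_mul_zMat (th k)
      have hpolyT : (th ((k+1:ℕ))) 0 0 - (th ((k+1:ℕ))) 0 1
          = -((th k) 0 0 - (th k) 0 1) - X * ((th k) 0 1) := by
        rw [hx, e00, e01]; ring
      have hpolyB : (th ((k+1:ℕ))) 0 1 = ((th k) 0 0 - (th k) 0 1) + X * ((th k) 0 1)
          + ((th k) 0 1) := by
        rw [hx, e01]; ring
      funext x
      cases x with
      | inl i =>
          simp only [Sum.elim_inl]
          rw [Matrix.neg_mulVec, Matrix.one_mulVec, Matrix.neg_mulVec, hcm]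
          simp only [Pi.add_apply, Pi.neg_apply]
          rw [show rTop n (th ((k+1:ℕ))) i
            = ((((th ((k+1:ℕ))) 0 0 - (th ((k+1:ℕ))) 0 1).coeff (i:ℕ) : ℤ) : ℝ) from rfl]
          rw [show rTop n (th k) i
            = ((((th k) 0 0 - (th k) 0 1).coeff (i:ℕ) : ℤ) : ℝ) from rfl]
          rw [hpolyT]
          simp only [Polynomial.coeff_sub, Polynomial.coeff_neg]
          push_cast
          ring
      | inr i =>
          simp only [Sum.elim_inr]
          rw [Matrix.one_mulVec, Matrix.add_mulVec, Matrix.one_mulVec, hcm]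
          simp only [Pi.add_apply]
          rw [show rBot n (th ((k+1:ℕ))) i
            = ((((th ((k+1:ℕ))) 0 1).coeff (i:ℕ) : ℤ) : ℝ) from rfl]
          rw [show rTop n (th k) i
            = ((((th k) 0 0 - (th k) 0 1).coeff (i:ℕ) : ℤ) : ℝ) from rfl]
          rw [show rBot n (th k) i = ((((th k) 0 1).coeff (i:ℕ) : ℤ) : ℝ) from rfl]
          rw [hpolyB]
          simp only [Polynomial.coeff_add, Polynomial.coeff_sub]
          push_cast
          ring

lemma lemNeg : ∀ j, j ≤ n - 1 → pInv Q ^ j *ᵥ uVec n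
    = Sum.elim (rTop n (th (-(j:ℕ)))) (rBot n (th (-(j:ℕ)))) := by
  intro j
  induction j with
  | zero =>
      intro _
      rw [pow_zero, Matrix.one_mulVec, show (-((0:ℕ):ℤ)) = 0 by norm_num, th_zero]
      funext x
      cases x with
      | inl i =>
          show (if (i:ℕ) = 0 then (1:ℝ) else 0) = rTop n 1 i
          rw [rTop, Matrix.one_apply_eq, one_entry_01, sub_zero, Polynomial.coeff_one]
          by_cases hi : (i:ℕ) = 0
          · rw [if_pos hi, if_pos (by omega)]; simp
          · rw [if_neg hi, if_neg (by omega)]; simp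
      | inr i =>
          show (0:ℝ) = rBot n 1 i
          rw [rBot, one_entry_01]
          simp
  | succ j ih =>
      intro hj1
      have hj : j ≤ n - 1 := by omega
      rw [pow_succ', ← Matrix.mulVec_mulVec, ih hj, pInv, Matrix.fromBlocks_mulVec]
      simp only [Sum.elim_comp_inl, Sum.elim_comp_inr]
      have hp00 : ((th (-(j:ℕ))) 0 0).coeff (n-1) = 0 := th_top_coeff_neg j (by omega)
      have hxy : rTop n (th (-(j:ℕ))) + rBot n (th (-(j:ℕ)))
          = fun i : Fin n => ((((th (-(j:ℕ))) 0 0).coeff (i:ℕ) : ℤ) : ℝ) := by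
        funext i
        show rTop n (th (-(j:ℕ))) i + rBot n (th (-(j:ℕ))) i = _
        rw [rTop, rBot]
        push_cast
        rw [Polynomial.coeff_sub]
        push_cast
        ring
      have hcm : cm Q *ᵥ (rTop n (th (-(j:ℕ))) + rBot n (th (-(j:ℕ))))
          = fun i : Fin n => (((X * ((th (-(j:ℕ))) 0 0)).coeff (i:ℕ) : ℤ) : ℝ) := by
        rw [hxy]
        exact cmul Q ((th (-(j:ℕ))) 0 0) hp00
      have hx : th (-((j+1:ℕ):ℤ)) = th (-(j:ℕ)) * zMatInv := by
        rw [show (-((j+1:ℕ):ℤ)) = (-(j:ℕ)) - 1 by push_cast; ring, th_sub_one]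
      obtain ⟨e00, e01⟩ := th_entries_mul_zMatInv (th (-(j:ℕ)))
      have hpolyT : (th (-((j+1:ℕ):ℤ))) 0 0 - (th (-((j+1:ℕ):ℤ))) 0 1
          = -((th (-(j:ℕ))) 0 0 - (th (-(j:ℕ))) 0 1) - X * ((th (-(j:ℕ))) 0 0) := by
        rw [hx, e00, e01]; ring
      have hpolyB : (th (-((j+1:ℕ):ℤ))) 0 1
          = ((th (-(j:ℕ))) 0 0 - (th (-(j:ℕ))) 0 1) + ((th (-(j:ℕ))) 0 1) := by
        rw [hx, e01]; ring
      funext x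
      cases x with
      | inl i =>
          simp only [Sum.elim_inl]
          rw [Matrix.sub_mulVec, Matrix.neg_mulVec, Matrix.one_mulVec, Matrix.neg_mulVec]
          simp only [Pi.add_apply, Pi.sub_apply, Pi.neg_apply]
          have hcm2 : (cm Q *ᵥ rTop n (th (-(j:ℕ)))) i + (cm Q *ᵥ rBot n (th (-(j:ℕ)))) i
              = (((X * ((th (-(j:ℕ))) 0 0)).coeff (i:ℕ) : ℤ) : ℝ) := by
            have := congrFun hcm i
            rw [← this, Matrix.mulVec_add]
            rfl
          rw [sub_eq_add_neg, add_assoc, ← neg_add, hcm2, ← sub_eq_add_neg]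
          rw [show rTop n (th (-((j+1:ℕ):ℤ))) i
            = ((((th (-((j+1:ℕ):ℤ))) 0 0 - (th (-((j+1:ℕ):ℤ))) 0 1).coeff (i:ℕ) : ℤ) : ℝ)
            from rfl]
          rw [show rTop n (th (-(j:ℕ))) i
            = ((((th (-(j:ℕ))) 0 0 - (th (-(j:ℕ))) 0 1).coeff (i:ℕ) : ℤ) : ℝ) from rfl]
          rw [hpolyT]
          simp only [Polynomial.coeff_sub, Polynomial.coeff_neg]
          push_cast
          ring
      | inr i =>
          simp only [Sum.elim_inr]
          rw [Matrix.one_mulVec, Matrix.one_mulVec]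
          simp only [Pi.add_apply]
          rw [show rBot n (th (-((j+1:ℕ):ℤ))) i
            = ((((th (-((j+1:ℕ):ℤ))) 0 1).coeff (i:ℕ) : ℤ) : ℝ) from rfl]
          rw [show rTop n (th (-(j:ℕ))) i
            = ((((th (-(j:ℕ))) 0 0 - (th (-(j:ℕ))) 0 1).coeff (i:ℕ) : ℤ) : ℝ) from rfl]
          rw [show rBot n (th (-(j:ℕ))) i = ((((th (-(j:ℕ))) 0 1).coeff (i:ℕ) : ℤ) : ℝ) from rfl]
          rw [hpolyB]
          simp only [Polynomial.coeff_add, Polynomial.coeff_sub]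
          push_cast
          ring

end Core3


section Core4

variable {n : ℕ} (Q : Matrix (Fin n) (Fin n) ℝ)

lemma pPow_mulVec (m : ℕ) :
    pMat Q ^ m *ᵥ uVec n = ∑ x ∈ Finset.range (m+1),
      ((-1:ℝ)^(m-x) * ((m.choose x : ℕ):ℝ)) • (nMat Q ^ x *ᵥ uVec n) := by
  have hP : pMat Q = nMat Q + (-1) := by rw [nMat_eq]; abel
  have hcomm : Commute (nMat Q) (-1 : Matrix (Fin n ⊕ Fin n) (Fin n ⊕ Fin n) ℝ) :=
    (Commute.one_right _).neg_right
  have hterm : ∀ x : ℕ,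
      nMat Q ^ x * (-1 : Matrix (Fin n ⊕ Fin n) (Fin n ⊕ Fin n) ℝ)^(m-x)
          * ((m.choose x : ℕ) : Matrix (Fin n ⊕ Fin n) (Fin n ⊕ Fin n) ℝ)
      = ((-1:ℝ)^(m-x) * ((m.choose x:ℕ):ℝ)) • nMat Q ^ x := by
    intro x
    have h1 : (-1 : Matrix (Fin n ⊕ Fin n) (Fin n ⊕ Fin n) ℝ) = (-1:ℝ) • 1 := by simp
    have h2 : ((m.choose x : ℕ) : Matrix (Fin n ⊕ Fin n) (Fin n ⊕ Fin n) ℝ)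
        = ((m.choose x:ℕ):ℝ) • 1 := by
      rw [Nat.cast_smul_eq_nsmul, nsmul_eq_mul, mul_one]
    rw [h1, h2, _root_.smul_pow, one_pow]
    simp only [smul_mul_assoc, mul_smul_comm, mul_one, smul_smul]
    congr 1
    ring
  rw [hP, Commute.add_pow hcomm, Finset.sum_congr rfl (fun x _ => hterm x)]
  funext r
  rw [sum_smul_mulVec]
  rw [Finset.sum_apply]
  exact Finset.sum_congr rfl (fun x _ => by simp)

lemma sum_range_ite_le (N m : ℕ) (hm : m < N) (f : ℕ → ℝ) :
    ∑ x ∈ Finset.range N, (if x ≤ m then f x else 0) = ∑ x ∈ Finset.range (m+1), f x := by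
  rw [← Finset.sum_filter]
  congr 1
  ext a
  simp only [Finset.mem_filter, Finset.mem_range]
  omega

lemma mainID : pMat Q ^ (n-1) * thetaR n = gam Q * binU n := by
  ext r c
  have hmlt : (finSumFinEquiv c : ℕ) < n + n := (finSumFinEquiv c).isLt
  set m := (finSumFinEquiv c : ℕ) with hm
  have hL : (pMat Q ^ (n-1) * thetaR n) r c = (pMat Q ^ m *ᵥ uVec n) r := by
    have hrfl : (pMat Q ^ (n-1) * thetaR n) r c
        = (pMat Q ^ (n-1) *ᵥ (fun s => thetaR n s c)) r := rfl
    rw [hrfl]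
    have hcol : (fun s => thetaR n s c)
        = Sum.elim (rTop n (th ((m:ℤ) - ((n-1:ℕ):ℤ)))) (rBot n (th ((m:ℤ) - ((n-1:ℕ):ℤ)))) := by
      funext s
      cases s with
      | inl i => rfl
      | inr i => rfl
    rw [hcol]
    rcases le_or_gt (n-1) m with hge | hlt
    · have hk : m - (n-1) ≤ n := by omega
      have hcast : ((m:ℤ) - ((n-1:ℕ):ℤ)) = ((m - (n-1) : ℕ) : ℤ) := by omega
      rw [hcast, ← lemPos Q (m - (n-1)) hk, Matrix.mulVec_mulVec, ← pow_add,
        show (n-1) + (m - (n-1)) = m by omega]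
    · have hj : n-1-m ≤ n - 1 := by omega
      have hcast : ((m:ℤ) - ((n-1:ℕ):ℤ)) = -((n-1-m : ℕ) : ℤ) := by omega
      rw [hcast, ← lemNeg Q (n-1-m) hj, Matrix.mulVec_mulVec]
      have hsplit : pMat Q ^ (n-1) = pMat Q ^ m * pMat Q ^ (n-1-m) := by
        rw [← pow_add]
        congr 1
        omega
      rw [hsplit, mul_assoc, pow_cancel Q (n-1-m), mul_one]
  have hR : (gam Q * binU n) r c = (pMat Q ^ m *ᵥ uVec n) r := by
    rw [Matrix.mul_apply]
    have hs : ∀ s, gam Q r s * binU n s c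
        = (if (finSumFinEquiv s : ℕ) ≤ m then
            ((-1:ℝ)^(m - (finSumFinEquiv s:ℕ)) * ((m.choose (finSumFinEquiv s:ℕ) : ℕ):ℝ))
              * ((nMat Q ^ (finSumFinEquiv s:ℕ) *ᵥ uVec n) r)
           else 0) := by
      intro s
      rw [gam, binU]
      simp only [Matrix.of_apply, ← hm]
      by_cases h : (finSumFinEquiv s : ℕ) ≤ m
      · rw [if_pos h, if_pos h]
        ring
      · rw [if_neg h, if_neg h, mul_zero]
    rw [Finset.sum_congr rfl (fun s _ => hs s)]
    rw [Fintype.sum_equiv finSumFinEquiv _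
      (fun x : Fin (n+n) => if (x:ℕ) ≤ m then
        ((-1:ℝ)^(m-(x:ℕ)) * ((m.choose (x:ℕ):ℕ):ℝ)) * ((nMat Q ^ (x:ℕ) *ᵥ uVec n) r) else 0)
      (fun s => rfl)]
    rw [Fin.sum_univ_eq_sum_range (fun x : ℕ => if x ≤ m then
        ((-1:ℝ)^(m-x) * ((m.choose x:ℕ):ℝ)) * ((nMat Q ^ x *ᵥ uVec n) r) else 0)]
    rw [sum_range_ite_le (n+n) m hmlt]
    rw [pPow_mulVec, Finset.sum_apply]
    exact Finset.sum_congr rfl (fun x _ => by simp)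
  rw [hL, hR]

lemma det_binU : (binU n).det = 1 := by
  have h1 : (binU n).det
      = ((binU n).submatrix finSumFinEquiv.symm finSumFinEquiv.symm).det :=
    (Matrix.det_submatrix_equiv_self finSumFinEquiv.symm (binU n)).symm
  rw [h1]
  have htri : ((binU n).submatrix finSumFinEquiv.symm finSumFinEquiv.symm).BlockTriangular id := by
    intro a b hab
    have hba : (b:ℕ) < (a:ℕ) := hab
    show binU n (finSumFinEquiv.symm a) (finSumFinEquiv.symm b) = 0
    rw [binU]
    simp only [Matrix.of_apply, Equiv.apply_symm_apply]
    rw [if_neg (by omega)]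
  rw [Matrix.det_of_upperTriangular htri]
  apply Finset.prod_eq_one
  intro x _
  show binU n (finSumFinEquiv.symm x) (finSumFinEquiv.symm x) = 1
  rw [binU]
  simp only [Matrix.of_apply, Equiv.apply_symm_apply]
  rw [if_pos (le_refl _)]
  simp

lemma det_pMat : (pMat Q).det = (-1:ℝ)^n := by
  have hfac : pMat Q = fromBlocks (-1) 0 1 1 * fromBlocks 1 (cm Q) 0 1 := by
    rw [Matrix.fromBlocks_multiply, pMat,
      show ((-1 : Matrix (Fin n) (Fin n) ℝ) * 1 + 0 * 0) = -1 by noncomm_ring,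
      show ((-1 : Matrix (Fin n) (Fin n) ℝ) * cm Q + 0 * 1) = -(cm Q) by noncomm_ring,
      show ((1 : Matrix (Fin n) (Fin n) ℝ) * 1 + 1 * 0) = 1 by noncomm_ring,
      show ((1 : Matrix (Fin n) (Fin n) ℝ) * cm Q + 1 * 1) = cm Q + 1 by noncomm_ring]
  rw [hfac, Matrix.det_mul, Matrix.det_fromBlocks_zero₁₂, Matrix.det_fromBlocks_zero₂₁]
  simp [show (-1 : Matrix (Fin n) (Fin n) ℝ) = -(1 : Matrix (Fin n) (Fin n) ℝ) from rfl,
    Matrix.det_neg, Fintype.card_fin]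

lemma det_bigH : (bigH Q).det = (wk Q).det * ((-1:ℝ)^n * (Q.det * (wk Q).det)) := by
  have hfac : bigH Q
      = fromBlocks 1 0 1 1 * fromBlocks (wk Q) ((Q+2) * wk Q) 0 (-(Q * wk Q)) := by
    rw [Matrix.fromBlocks_multiply, bigH,
      show ((1 : Matrix (Fin n) (Fin n) ℝ) * wk Q + 0 * 0) = wk Q by noncomm_ring,
      show ((1 : Matrix (Fin n) (Fin n) ℝ) * ((Q+2) * wk Q) + 0 * (-(Q * wk Q)))
        = (Q+2) * wk Q by noncomm_ring,
      show ((1 : Matrix (Fin n) (Fin n) ℝ) * wk Q + 1 * 0) = wk Q by noncomm_ring,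
      show ((1 : Matrix (Fin n) (Fin n) ℝ) * ((Q+2) * wk Q) + 1 * (-(Q * wk Q)))
        = 2 * wk Q by noncomm_ring]
  rw [hfac, Matrix.det_mul, Matrix.det_fromBlocks_zero₁₂, Matrix.det_one, one_mul, one_mul,
    Matrix.det_fromBlocks_zero₂₁, Matrix.det_neg, Matrix.det_mul, Fintype.card_fin]

lemma neg_one_pow_sq (k : ℕ) : (((-1:ℝ)^k))^2 = 1 := by
  rw [← pow_mul, mul_comm, pow_mul, neg_one_sq, one_pow]

/-- **Core identity** (squared form). -/
theorem core_sq : ((wBig Q).det)^2 = ((Q.charpoly.coeff 0) * ((wk Q).det)^2)^2 := by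
  have h1 : (wBig Q).det = (bigH Q).det * (gam Q).det := by
    rw [wBig_factor, Matrix.det_mul]
  have h2 : ((pMat Q).det)^(n-1) * (thetaR n).det = (gam Q).det := by
    have h := congrArg Matrix.det (mainID Q)
    rw [Matrix.det_mul, Matrix.det_mul, Matrix.det_pow, det_binU, mul_one] at h
    exact h
  have hθ : ((thetaR n).det)^2 = 1 := by
    have hmap : (thetaR n).det = (((thetaZ n).det : ℤ) : ℝ) := by
      rw [thetaR, ← RingHom.mapMatrix_apply, ← RingHom.map_det]
      rfl
    rcases theta_det_unit (n := n) with h | h <;> rw [hmap, h] <;> norm_num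
  have hp2 : (((pMat Q).det)^(n-1))^2 = 1 := by
    rw [det_pMat, ← pow_mul, mul_comm ((n-1)) 2, pow_mul, neg_one_pow_sq, one_pow]
  have hgam2 : ((gam Q).det)^2 = 1 := by
    rw [← h2, mul_pow, hp2, hθ, one_mul]
  have hH2 : ((bigH Q).det)^2 = (Q.det)^2 * ((wk Q).det)^4 := by
    rw [det_bigH]
    have : ((-1:ℝ)^n)^2 = 1 := neg_one_pow_sq n
    nlinarith [this]
  have hdQ : (Q.det)^2 = ((Q.charpoly.coeff 0))^2 := by
    rw [Matrix.det_eq_sign_charpoly_coeff, mul_pow, Fintype.card_fin, neg_one_pow_sq, one_mul]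
  calc ((wBig Q).det)^2 = ((bigH Q).det)^2 * ((gam Q).det)^2 := by rw [h1]; ring
    _ = (Q.det)^2 * ((wk Q).det)^4 := by rw [hgam2, hH2, mul_one]
    _ = ((Q.charpoly.coeff 0) * ((wk Q).det)^2)^2 := by rw [hdQ]; ring

end Core4


/-! ### Graph layer -/

section Graph

variable {n : ℕ}

def sigEquiv (n : ℕ) : (Fin n ⊕ Fin n) ≃ (Fin n × Fin 2) where
  toFun := Sum.elim (fun v => (v, 0)) (fun v => (v, 1))
  invFun := fun p => if p.2 = 0 then Sum.inl p.1 else Sum.inr p.1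
  left_inv := by rintro (v|v) <;> simp
  right_inv := by
    rintro ⟨v, c⟩
    fin_cases c <;> simp

variable (G : SimpleGraph (Fin n))

lemma adj_rooted_00 (a b : Fin n) :
    (rootedProd G 2).Adj (a, 0) (b, 0) ↔ G.Adj a b := by
  rw [rootedProd, SimpleGraph.fromRel_adj]
  constructor
  · rintro ⟨hne, h | h⟩
    · rcases h with ⟨_, _, h⟩ | ⟨_, h⟩
      · exact h
      · simp at h
    · rcases h with ⟨_, _, h⟩ | ⟨_, h⟩
      · exact h.symm
      · simp at h
  · intro h
    exact ⟨by simp [h.ne], Or.inl (Or.inl ⟨rfl, rfl, h⟩)⟩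

lemma adj_rooted_01 (a b : Fin n) :
    (rootedProd G 2).Adj (a, 0) (b, 1) ↔ a = b := by
  rw [rootedProd, SimpleGraph.fromRel_adj]
  constructor
  · rintro ⟨hne, h | h⟩
    · rcases h with ⟨h, _, _⟩ | ⟨h, _⟩
      · simp at h
      · exact h
    · rcases h with ⟨h, _, _⟩ | ⟨h, hh⟩
      · simp at h
      · simp at hh
  · intro h
    exact ⟨by simp, Or.inl (Or.inr ⟨h, rfl⟩)⟩

lemma adj_rooted_11 (a b : Fin n) :
    ¬ (rootedProd G 2).Adj (a, 1) (b, 1) := by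
  rw [rootedProd, SimpleGraph.fromRel_adj]
  rintro ⟨hne, h | h⟩
  · rcases h with ⟨_, hh, _⟩ | ⟨_, hh⟩ <;> simp at hh
  · rcases h with ⟨_, hh, _⟩ | ⟨_, hh⟩ <;> simp at hh

lemma adj_rooted_10 (a b : Fin n) :
    (rootedProd G 2).Adj (a, 1) (b, 0) ↔ a = b := by
  rw [(rootedProd G 2).adj_comm]
  rw [adj_rooted_01]
  exact eq_comm

lemma degree_rooted_0 [DecidableRel G.Adj] [DecidableRel (rootedProd G 2).Adj] (v : Fin n) :
    (rootedProd G 2).degree (v, 0) = G.degree v + 1 := by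
  rw [SimpleGraph.degree, SimpleGraph.neighborFinset_eq_filter, Finset.card_filter]
  rw [Fintype.sum_prod_type]
  have hterm : ∀ w : Fin n, ∑ c : Fin 2, (if (rootedProd G 2).Adj (v, 0) (w, c) then 1 else 0)
      = (if G.Adj v w then 1 else 0) + (if v = w then 1 else 0) := by
    intro w
    rw [Fin.sum_univ_two]
    congr 1
    · exact if_congr (adj_rooted_00 G v w) rfl rfl
    · exact if_congr (adj_rooted_01 G v w) rfl rfl
  rw [Finset.sum_congr rfl (fun w _ => hterm w), Finset.sum_add_distrib]
  congr 1
  · rw [SimpleGraph.degree, SimpleGraph.neighborFinset_eq_filter, Finset.card_filter]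
  · rw [Finset.sum_ite_eq Finset.univ v (fun _ => 1), if_pos (Finset.mem_univ v)]

lemma degree_rooted_1 [DecidableRel (rootedProd G 2).Adj] (v : Fin n) :
    (rootedProd G 2).degree (v, 1) = 1 := by
  rw [SimpleGraph.degree, SimpleGraph.neighborFinset_eq_filter, Finset.card_filter]
  rw [Fintype.sum_prod_type]
  have hterm : ∀ w : Fin n, ∑ c : Fin 2, (if (rootedProd G 2).Adj (v, 1) (w, c) then 1 else 0)
      = (if v = w then 1 else 0) := by
    intro w
    rw [Fin.sum_univ_two]
    have h10 : (rootedProd G 2).Adj (v, 1) (w, 0) ↔ v = w := adj_rooted_10 G v w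
    have h11 := adj_rooted_11 G v w
    by_cases hvw : v = w
    · rw [if_pos (h10.mpr hvw), if_neg h11, if_pos hvw]
    · rw [if_neg (fun hh => hvw (h10.mp hh)), if_neg h11, if_neg hvw]
  rw [Finset.sum_congr rfl (fun w _ => hterm w)]
  rw [Finset.sum_ite_eq Finset.univ v (fun _ => 1), if_pos (Finset.mem_univ v)]

end Graph


section Graph2

variable {n : ℕ}

lemma qMat_rooted (G : SimpleGraph (Fin n)) :
    qMat ℝ (rootedProd G 2)
      = (bq (qMat ℝ G)).submatrix (sigEquiv n).symm (sigEquiv n).symm := by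
  classical
  ext p q
  obtain ⟨s, rfl⟩ : ∃ s, (sigEquiv n) s = p :=
    ⟨(sigEquiv n).symm p, (sigEquiv n).apply_symm_apply p⟩
  obtain ⟨t, rfl⟩ : ∃ t, (sigEquiv n) t = q :=
    ⟨(sigEquiv n).symm q, (sigEquiv n).apply_symm_apply q⟩
  rw [Matrix.submatrix_apply, Equiv.symm_apply_apply, Equiv.symm_apply_apply]
  have hq : ∀ (V : Type) (_ : Fintype V) (_ : DecidableEq V) (H : SimpleGraph V)
      (inst : DecidableRel H.Adj) (v w : V),
      qMat ℝ H v w = (if v = w then ((H.degree v : ℕ) : ℝ) else 0)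
        + (if H.Adj v w then 1 else 0) := by
    intro V _ _ H inst v w
    rw [qMat]
    rw [Matrix.add_apply]
    congr 1
    · rw [SimpleGraph.degMatrix, Matrix.diagonal_apply]
      congr!
    · rw [SimpleGraph.adjMatrix_apply]
      congr!
  cases s with
  | inl a =>
      cases t with
      | inl b =>
          show qMat ℝ (rootedProd G 2) (a, 0) (b, 0) = (qMat ℝ G + 1) a b
          rw [hq _ _ _ _ (Classical.decRel _), Matrix.add_apply,
            hq _ _ _ _ (Classical.decRel _), Matrix.one_apply]
          by_cases hab : a = b
          · subst hab
            rw [if_pos rfl, if_pos rfl, if_pos rfl, degree_rooted_0,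
              if_neg ((rootedProd G 2).irrefl), if_neg (G.irrefl)]
            push_cast
            ring
          · rw [if_neg (by simp [hab]), if_neg hab, if_neg hab,
              if_congr (adj_rooted_00 G a b) rfl rfl]
            ring
      | inr b =>
          show qMat ℝ (rootedProd G 2) (a, 0) (b, 1) = (1 : Matrix (Fin n) (Fin n) ℝ) a b
          rw [hq _ _ _ _ (Classical.decRel _), Matrix.one_apply,
            if_neg (by simp : ¬ ((a, (0:Fin 2)) = (b, (1:Fin 2)))), zero_add,
            if_congr (adj_rooted_01 G a b) rfl rfl]
  | inr a =>
      cases t with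
      | inl b =>
          show qMat ℝ (rootedProd G 2) (a, 1) (b, 0) = (1 : Matrix (Fin n) (Fin n) ℝ) a b
          rw [hq _ _ _ _ (Classical.decRel _), Matrix.one_apply,
            if_neg (by simp : ¬ ((a, (1:Fin 2)) = (b, (0:Fin 2)))), zero_add,
            if_congr (adj_rooted_10 G a b) rfl rfl]
      | inr b =>
          show qMat ℝ (rootedProd G 2) (a, 1) (b, 1) = (1 : Matrix (Fin n) (Fin n) ℝ) a b
          rw [hq _ _ _ _ (Classical.decRel _), Matrix.one_apply]
          by_cases hab : a = b
          · subst hab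
            rw [if_pos rfl, if_pos rfl, if_neg ((rootedProd G 2).irrefl), degree_rooted_1]
            norm_num
          · rw [if_neg (by simp [hab]), if_neg hab, zero_add,
              if_neg (adj_rooted_11 G a b)]

lemma det_submatrix_sq {ι κ : Type} [Fintype ι] [DecidableEq ι] [Fintype κ] [DecidableEq κ]
    (A : Matrix ι ι ℝ) (e f : κ ≃ ι) :
    ((A.submatrix e f).det)^2 = (A.det)^2 := by
  have hsub : A.submatrix e f = (A.submatrix e e).submatrix id ⇑(f.trans e.symm) := by
    ext i j
    simp [Matrix.submatrix_apply]
  rw [hsub, Matrix.det_permute' (f.trans e.symm) (A.submatrix e e), mul_pow,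
    Matrix.det_submatrix_equiv_self]
  rcases Int.units_eq_one_or (Equiv.Perm.sign (f.trans e.symm)) with h | h <;>
    rw [h] <;> norm_num

end Graph2


section Final

variable {n : ℕ}

lemma walkdet_sq (G : SimpleGraph (Fin n)) :
    (qWalkDet G)^2 = ((wk (qMat ℝ G)).det)^2 := by
  rw [qWalkDet]
  have hmat : (Matrix.of fun i j : Fin (Fintype.card (Fin n)) =>
      ((qMat ℝ G ^ (j : ℕ)) *ᵥ (fun _ => (1 : ℝ))) ((Fintype.equivFin (Fin n)).symm i))
      = (wk (qMat ℝ G)).submatrix (Fintype.equivFin (Fin n)).symm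
          (finCongr (Fintype.card_fin n)) := by
    ext i j
    rfl
  rw [hmat, det_submatrix_sq]

lemma pow_rooted (G : SimpleGraph (Fin n)) (k : ℕ) :
    qMat ℝ (rootedProd G 2) ^ k
      = (bq (qMat ℝ G) ^ k).submatrix (sigEquiv n).symm (sigEquiv n).symm := by
  induction k with
  | zero => rw [pow_zero, pow_zero, Matrix.submatrix_one_equiv]
  | succ k ih =>
      rw [pow_succ, pow_succ, ih, qMat_rooted G, Matrix.submatrix_mul_equiv]

lemma walkdet_rooted_sq (G : SimpleGraph (Fin n)) :
    (qWalkDet (rootedProd G 2))^2 = ((wBig (qMat ℝ G)).det)^2 := by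
  rw [qWalkDet]
  have hcard : Fintype.card (Fin n × Fin 2) = n + n := by
    simp [Fintype.card_prod]
    omega
  have hmat : (Matrix.of fun i j : Fin (Fintype.card (Fin n × Fin 2)) =>
      ((qMat ℝ (rootedProd G 2) ^ (j : ℕ)) *ᵥ (fun _ => (1 : ℝ)))
        ((Fintype.equivFin (Fin n × Fin 2)).symm i))
      = (wBig (qMat ℝ G)).submatrix
          ((Fintype.equivFin (Fin n × Fin 2)).symm.trans (sigEquiv n).symm)
          ((finCongr hcard).trans finSumFinEquiv.symm) := by
    ext i j
    rw [Matrix.of_apply, pow_rooted G (j:ℕ), Matrix.submatrix_mulVec_equiv]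
    rw [Matrix.submatrix_apply, wBig, Matrix.of_apply]
    rw [show finSumFinEquiv (((finCongr hcard).trans finSumFinEquiv.symm) j)
      = finCongr hcard j from Equiv.apply_symm_apply _ _]
    rfl
  rw [hmat, det_submatrix_sq]

end Final

end DetWalkAux


/-- `det W_Q(G∘P₂) = ± a₀ (det W_Q(G))²`, where `a₀` is the constant
term of the characteristic polynomial of `Q(G)`. -/
theorem detWalk_rootedProd_two (n : ℕ) (G : SimpleGraph (Fin n)) :
    ∃ ε : ℝ, (ε = 1 ∨ ε = -1) ∧
      qWalkDet (rootedProd G 2) =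
        ε * ((qMat ℝ G).charpoly.coeff 0) * (qWalkDet G) ^ 2 := by
  have hG := DetWalkAux.walkdet_sq G
  have hGP := DetWalkAux.walkdet_rooted_sq G
  have hcore := DetWalkAux.core_sq (qMat ℝ G)
  have key : (qWalkDet (rootedProd G 2))^2
      = (((qMat ℝ G).charpoly.coeff 0) * (qWalkDet G)^2)^2 := by
    calc (qWalkDet (rootedProd G 2))^2 = ((DetWalkAux.wBig (qMat ℝ G)).det)^2 := hGP
      _ = ((qMat ℝ G).charpoly.coeff 0)^2 * (((DetWalkAux.wk (qMat ℝ G)).det)^2)^2 := by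
          rw [hcore]; ring
      _ = ((qMat ℝ G).charpoly.coeff 0)^2 * ((qWalkDet G)^2)^2 := by rw [← hG]
      _ = (((qMat ℝ G).charpoly.coeff 0) * (qWalkDet G)^2)^2 := by ring
  set L := qWalkDet (rootedProd G 2) with hL
  set R := ((qMat ℝ G).charpoly.coeff 0) * (qWalkDet G)^2 with hR
  have h0 : (L - R) * (L + R) = 0 := by linear_combination key
  rcases mul_eq_zero.mp h0 with h | h
  · refine ⟨1, Or.inl rfl, ?_⟩
    have : L = R := by linarith [h, sub_eq_zero.mp h]
    rw [this, hR]
    ring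
  · refine ⟨-1, Or.inr rfl, ?_⟩
    have : L = -R := by linarith [h, eq_neg_of_add_eq_zero_left h]
    rw [this, hR]
    ring
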